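/- arXiv:2207.05846 — 7 statements merged into one kernel-verified Lean document; each statement's English description precedes it below -/
import Mathlib

section
/- Let p : [0,1] → [0,1] be strictly increasing and continuous, and let c ∈ [0,1] be a constant (representing β·q(y)·x_vu with x_n fixed). Then there exists a unique P ∈ [0,1] satisfying P = p(x_n + (1 - P·c)·x_vu), for any fixed x_n, x_vu ≥ 0 with x_n + x_vu ≤ 1. -/
open Set

/-- Existence and uniqueness of the equilibrium accident probability `P`
satisfying the consistency condition `P = p (x_n + (1 - P*c) * x_vu)`. -/
theorem stmt0
    (p : ℝ → ℝ)
    (hmono : StrictMonoOn p (Icc 0 1))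
    (hcont : ContinuousOn p (Icc 0 1))
    (hmap : ∀ d ∈ Icc (0:ℝ) 1, p d ∈ Icc (0:ℝ) 1)
    (c : ℝ) (hc : c ∈ Icc (0:ℝ) 1)
    (xn xvu : ℝ) (hxn : 0 ≤ xn) (hxvu : 0 ≤ xvu) (hsum : xn + xvu ≤ 1) :
    ∃! P : ℝ, P ∈ Icc (0:ℝ) 1 ∧ P = p (xn + (1 - P * c) * xvu) := by
  obtain ⟨hc0, hc1⟩ := hc
  -- the argument maps [0,1] to [0,1]
  have harg : ∀ x ∈ Icc (0:ℝ) 1, xn + (1 - x * c) * xvu ∈ Icc (0:ℝ) 1 := by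
    intro x ⟨hx0, hx1⟩
    have hxc0 : 0 ≤ x * c := mul_nonneg hx0 hc0
    have hxc1 : x * c ≤ 1 := by
      calc x * c ≤ 1 * 1 := mul_le_mul hx1 hc1 hc0 zero_le_one
      _ = 1 := one_mul 1
    constructor
    · have : 0 ≤ (1 - x * c) * xvu := mul_nonneg (by linarith) hxvu
      linarith
    · have : (1 - x * c) * xvu ≤ 1 * xvu := by
        apply mul_le_mul_of_nonneg_right (by linarith) hxvu
      nlinarith
  set f : ℝ → ℝ := fun x => x - p (xn + (1 - x * c) * xvu) with hf
  have hfc : ContinuousOn f (Icc 0 1) := by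
    apply ContinuousOn.sub continuousOn_id
    apply hcont.comp
    · exact (continuousOn_const.add (((continuousOn_const.sub
        (continuousOn_id.mul continuousOn_const)).mul continuousOn_const)))
    · exact harg
  have h01 : (0:ℝ) ∈ Icc (0:ℝ) 1 := ⟨le_refl 0, zero_le_one⟩
  have h11 : (1:ℝ) ∈ Icc (0:ℝ) 1 := ⟨zero_le_one, le_refl 1⟩
  have hf0 : f 0 ≤ 0 := by
    have := (hmap _ (harg 0 h01)).1
    simp only [hf]
    linarith
  have hf1 : 0 ≤ f 1 := by
    have := (hmap _ (harg 1 h11)).2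
    simp only [hf]
    linarith
  have hiv : (0:ℝ) ∈ f '' Icc 0 1 := by
    have := intermediate_value_Icc (zero_le_one) hfc
    exact this ⟨hf0, hf1⟩
  obtain ⟨P, hP, hPf⟩ := hiv
  have hPeq : P = p (xn + (1 - P * c) * xvu) := by
    simp only [hf] at hPf; linarith
  refine ⟨P, ⟨hP, hPeq⟩, ?_⟩
  rintro Q ⟨hQ, hQeq⟩
  -- uniqueness
  by_contra hne
  have hmono' := hmono.monotoneOn
  rcases lt_or_gt_of_ne hne with h | h
  · -- Q < P
    have hargle : xn + (1 - P * c) * xvu ≤ xn + (1 - Q * c) * xvu := by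
      have : Q * c ≤ P * c := mul_le_mul_of_nonneg_right h.le hc0
      nlinarith
    have := hmono' (harg P hP) (harg Q hQ) hargle
    rw [← hPeq, ← hQeq] at this
    linarith
  · have hargle : xn + (1 - Q * c) * xvu ≤ xn + (1 - P * c) * xvu := by
      have : P * c ≤ Q * c := mul_le_mul_of_nonneg_right h.le hc0
      nlinarith
    have := hmono' (harg Q hQ) (harg P hP) hargle
    rw [← hPeq, ← hQeq] at this
    linarith
end

section
/- Let p : [0,1] → (0,1) be strictly increasing and continuous, r > 1, s = β·q(y) ∈ [0,1], y ∈ [0,1]. Suppose p(1 - (s/(1+r))·y) < 1/(1+r) (regime R1). Then the unique P solving P = p(1 - P·s·y) satisfies P < 1/(1+r). -/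
open Set

/-- In regime (R1), the all-reckless equilibrium accident probability
(the solution of `P = p (1 - P*s*y)`) satisfies `P < 1/(1+r)`. -/
theorem stmt8
    (p : ℝ → ℝ)
    (hmono : StrictMonoOn p (Icc 0 1))
    (hcont : ContinuousOn p (Icc 0 1))
    (hmap : ∀ d ∈ Icc (0:ℝ) 1, p d ∈ Ioo (0:ℝ) 1)
    (r y s : ℝ) (hr : 1 < r) (hy : y ∈ Icc (0:ℝ) 1) (hs : s ∈ Icc (0:ℝ) 1)
    (hR1 : p (1 - s / (1 + r) * y) < 1 / (1 + r))
    (P : ℝ) (hP : P ∈ Icc (0:ℝ) 1) (hPeq : P = p (1 - P * s * y)) :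
    P < 1 / (1 + r) := by
  by_contra h
  push_neg at h
  obtain ⟨hy0, hy1⟩ := hy
  obtain ⟨hs0, hs1⟩ := hs
  obtain ⟨hP0, hP1⟩ := hP
  have hr0 : (0:ℝ) < 1 + r := by linarith
  have hinv : (0:ℝ) < 1 / (1 + r) := by positivity
  have hinv1 : 1 / (1 + r) ≤ 1 := by
    rw [div_le_one hr0]; linarith
  have hPsy0 : 0 ≤ P * s * y := by positivity
  have hPsy1 : P * s * y ≤ 1 := by
    calc P * s * y ≤ 1 * 1 * 1 := by
          apply mul_le_mul (mul_le_mul hP1 hs1 hs0 (by norm_num)) hy1 hy0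
          norm_num
      _ = 1 := by ring
  have h1 : (1 - P * s * y) ∈ Icc (0:ℝ) 1 := ⟨by linarith, by linarith⟩
  have h2 : (1 - s / (1 + r) * y) ∈ Icc (0:ℝ) 1 := by
    constructor
    · have : s / (1 + r) * y ≤ 1 := by
        calc s / (1 + r) * y ≤ 1 * 1 := by
              apply mul_le_mul _ hy1 hy0 (by norm_num)
              rw [div_le_one hr0]; linarith
          _ = 1 := by ring
      linarith
    · have : 0 ≤ s / (1 + r) * y := by positivity
      linarith
  have hle : 1 - P * s * y ≤ 1 - s / (1 + r) * y := by
    have : s / (1 + r) * y ≤ P * s * y := by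
      have := mul_le_mul_of_nonneg_right (mul_le_mul_of_nonneg_left h hs0) hy0
      calc s / (1 + r) * y = s * (1 / (1 + r)) * y := by ring
        _ ≤ s * P * y := this
        _ = P * s * y := by ring
    linarith
  have := hmono.monotoneOn h1 h2 hle
  have : P < 1 / (1 + r) := by
    rw [hPeq]
    exact lt_of_le_of_lt this hR1
  linarith
end

section
/- Let p : [0,1] → (0,1) be strictly increasing and continuous, r > 1, s = β·q(y) ∈ [0,1], y ∈ [0,1]. Suppose p(0) > 1/(1 + r(1-s)) (regime R3). Then the equilibrium accident probability is P = p(0); i.e., the profile x = (0, 0, 0) satisfies the consistency equation with P = p(0), and p(0) > 1/(1+r) so that the best-response condition for all drivers being careful holds. -/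
open Set

/-- In regime (R3), the all-careful profile `(0,(0,0))` is consistent with
accident probability `P = p 0`, and `p 0 > 1/(1+r)` so all drivers being
careful is a best response. -/
theorem stmt9
    (p : ℝ → ℝ)
    (hmono : StrictMonoOn p (Icc 0 1))
    (hcont : ContinuousOn p (Icc 0 1))
    (hmap : ∀ d ∈ Icc (0:ℝ) 1, p d ∈ Ioo (0:ℝ) 1)
    (r y s : ℝ) (hr : 1 < r) (hy : y ∈ Icc (0:ℝ) 1) (hs : s ∈ Icc (0:ℝ) 1)
    (hR3 : 1 / (1 + r * (1 - s)) < p 0) :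
    p 0 = p (0 + (1 - p 0 * s) * 0) ∧ 1 / (1 + r) < p 0 := by
  constructor
  · norm_num
  · refine lt_of_le_of_lt ?_ hR3
    have h1 : (0:ℝ) < 1 + r * (1 - s) := by nlinarith [hs.1, hs.2]
    have h2 : 1 + r * (1 - s) ≤ 1 + r := by nlinarith [hs.1, hs.2]
    exact one_div_le_one_div_of_le h1 h2
end

section
/- Let p : [0,1] → (0,1) be strictly increasing and continuous, r > 1, s = β·q(y) ∈ (0,1], y ∈ (0,1]. Suppose p(0) ≤ 1/(1 + r(1-s)) ≤ p((1 - s/(1 + r(1-s)))·y) (regime R4). Let P* = 1/(1 + r(1-s)) and x_vu* = p⁻¹(P*)/(1 - P*·s). Then 0 ≤ x_vu* ≤ y, and the profile (0, x_vu*, 0) satisfies the consistency equation P* = p(0 + (1 - P*·s)·x_vu*). -/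
open Set

/-- In regime (R4) with `P* = 1/(1 + r(1-s))`, there is a preimage `d = p⁻¹(P*)`,
and the mixing mass `x_vu* = d / (1 - P* s)` lies in `[0, y]` and satisfies
the consistency equation `P* = p (0 + (1 - P* s) * x_vu*)`. -/
theorem stmt10
    (p : ℝ → ℝ)
    (hmono : StrictMonoOn p (Icc 0 1))
    (hcont : ContinuousOn p (Icc 0 1))
    (hmap : ∀ d ∈ Icc (0:ℝ) 1, p d ∈ Ioo (0:ℝ) 1)
    (r y s : ℝ) (hr : 1 < r) (hy : y ∈ Ioc (0:ℝ) 1) (hs : s ∈ Ioc (0:ℝ) 1)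
    (hR4 : p 0 ≤ 1 / (1 + r * (1 - s)) ∧
      1 / (1 + r * (1 - s)) ≤ p ((1 - s / (1 + r * (1 - s))) * y)) :
    ∃ d ∈ Icc (0:ℝ) 1, p d = 1 / (1 + r * (1 - s)) ∧
      0 ≤ d / (1 - (1 / (1 + r * (1 - s))) * s) ∧
      d / (1 - (1 / (1 + r * (1 - s))) * s) ≤ y ∧
      1 / (1 + r * (1 - s)) =
        p (0 + (1 - (1 / (1 + r * (1 - s))) * s) *
          (d / (1 - (1 / (1 + r * (1 - s))) * s))) := by
  obtain ⟨hy0, hy1⟩ := hy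
  obtain ⟨hs0, hs1⟩ := hs
  set A : ℝ := 1 + r * (1 - s) with hA
  -- rule out s = 1
  rcases lt_or_eq_of_le hs1 with hslt | hseq
  swap
  · exfalso
    have hA1 : A = 1 := by rw [hA, hseq]; ring
    have hpt : (1 - s / A) * y = 0 := by rw [hA1, hseq]; ring
    have := (hmap 0 ⟨le_refl 0, zero_le_one⟩).2
    have h2 := hR4.2
    rw [hpt, hA1] at h2
    simp at h2
    linarith
  -- main case: s < 1
  have hApos : (1:ℝ) < A := by
    have : 0 < r * (1 - s) := mul_pos (by linarith) (by linarith)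
    simp [hA]; linarith
  have hA0 : (0:ℝ) < A := by linarith
  set P : ℝ := 1 / A with hP
  have hP0 : 0 < P := by positivity
  have hP1 : P < 1 := by
    rw [hP, div_lt_one hA0]; exact hApos
  have hPs : P * s < 1 := lt_of_le_of_lt (by nlinarith) hP1
  have hden : 0 < 1 - P * s := by linarith
  have hsA : s / A = P * s := by rw [hP]; ring
  set e : ℝ := (1 - s / A) * y with he
  have hee : e = (1 - P * s) * y := by rw [he, hsA]
  have he0 : 0 ≤ e := by rw [hee]; positivity
  have hey : e ≤ y := by
    rw [hee]
    nlinarith [mul_nonneg (mul_nonneg hP0.le hs0.le) hy0.le]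
  have he1 : e ≤ 1 := le_trans hey hy1
  have hsub : Icc (0:ℝ) e ⊆ Icc 0 1 := Icc_subset_Icc le_rfl he1
  have hcont' : ContinuousOn p (Icc 0 e) := hcont.mono hsub
  have hivt : P ∈ Icc (p 0) (p e) := ⟨hR4.1, hR4.2⟩
  obtain ⟨d, hd, hpd⟩ := intermediate_value_Icc he0 hcont' hivt
  have hd1 : d ∈ Icc (0:ℝ) 1 := hsub hd
  refine ⟨d, hd1, hpd, ?_, ?_, ?_⟩
  · exact div_nonneg hd.1 hden.le
  · rw [div_le_iff₀ hden]
    calc d ≤ e := hd.2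
    _ = y * (1 - P * s) := by rw [hee]; ring
  · rw [zero_add, mul_div_cancel₀ _ (ne_of_gt hden), hpd]
end

section
/- Let p : [0,1] → (0,1) be strictly increasing and continuous, r > 1, y ∈ [0,1], and suppose β·q(y) = 0 (no signaling). If x = (x_n, x_vu, 0) is a signaling equilibrium with 0 < x_n < 1-y (non-V2V drivers mixing), then p(x_n + x_vu) = 1/(1+r). Consequently, any two signaling equilibria x¹, x² with β·q(y) = 0 and interior mixing satisfy x_n¹ + x_vu¹ = x_n² + x_vu², and have equal accident probabilities. -/
open Set

/-- With no signaling (`β q(y) = 0`), a signaling equilibrium in which non-V2V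
drivers mix (`0 < x_n < 1 - y`) has accident probability `p(x_n + x_vu) = 1/(1+r)`;
consequently any two such equilibria have the same total reckless mass and the
same accident probability. -/
theorem stmt11
    (p : ℝ → ℝ)
    (hmono : StrictMonoOn p (Icc 0 1))
    (hcont : ContinuousOn p (Icc 0 1))
    (hmap : ∀ d ∈ Icc (0:ℝ) 1, p d ∈ Ioo (0:ℝ) 1)
    (r y β qy : ℝ) (hr : 1 < r) (hy : y ∈ Icc (0:ℝ) 1)
    (hnosig : β * qy = 0)
    (xn₁ xvu₁ xn₂ xvu₂ : ℝ)
    (hxvu₁ : xvu₁ ∈ Icc (0:ℝ) y) (hxvu₂ : xvu₂ ∈ Icc (0:ℝ) y)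
    (hsum₁ : xn₁ + xvu₁ ∈ Icc (0:ℝ) 1) (hsum₂ : xn₂ + xvu₂ ∈ Icc (0:ℝ) 1)
    -- non-V2V drivers mix in both profiles
    (hmix₁ : 0 < xn₁ ∧ xn₁ < 1 - y) (hmix₂ : 0 < xn₂ ∧ xn₂ < 1 - y)
    -- Nash conditions for non-V2V drivers (careful cost `1 - P`, reckless cost `r P`)
    (hne₁C : xn₁ < 1 - y → 1 - p (xn₁ + xvu₁) ≤ r * p (xn₁ + xvu₁))
    (hne₁R : 0 < xn₁ → r * p (xn₁ + xvu₁) ≤ 1 - p (xn₁ + xvu₁))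
    (hne₂C : xn₂ < 1 - y → 1 - p (xn₂ + xvu₂) ≤ r * p (xn₂ + xvu₂))
    (hne₂R : 0 < xn₂ → r * p (xn₂ + xvu₂) ≤ 1 - p (xn₂ + xvu₂)) :
    p (xn₁ + xvu₁) = 1 / (1 + r) ∧
      xn₁ + xvu₁ = xn₂ + xvu₂ ∧
      p (xn₁ + xvu₁) = p (xn₂ + xvu₂) := by
  have h1 : 1 - p (xn₁ + xvu₁) = r * p (xn₁ + xvu₁) :=
    le_antisymm (hne₁C hmix₁.2) (hne₁R hmix₁.1)
  have h2 : 1 - p (xn₂ + xvu₂) = r * p (xn₂ + xvu₂) :=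
    le_antisymm (hne₂C hmix₂.2) (hne₂R hmix₂.1)
  have hr0 : (1:ℝ) + r ≠ 0 := by linarith
  have hp1 : p (xn₁ + xvu₁) = 1 / (1 + r) := by field_simp; linarith
  have hp2 : p (xn₂ + xvu₂) = 1 / (1 + r) := by field_simp; linarith
  have hpe : p (xn₁ + xvu₁) = p (xn₂ + xvu₂) := hp1.trans hp2.symm
  exact ⟨hp1, hmono.injOn hsum₁ hsum₂ hpe, hpe⟩
end

section
/- Fix r > 1, y ∈ (0,1], q(y) ∈ (0,1], and a strictly increasing continuous p : [0,1] → (0,1). For β ∈ [0,1], let P(β) denote the unique solution of P = p((1 - P·β·q(y))·y) (the consistency equation for the profile (0, y, 0)). Then P is strictly decreasing in β. -/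
open Set

/-- The regime-(R5) equilibrium accident probability, i.e. the solution of
`P = p ((1 - P*β*q(y)) * y)`, is strictly decreasing in the signal quality `β`. -/
theorem stmt13
    (p : ℝ → ℝ)
    (hmono : StrictMonoOn p (Icc 0 1))
    (hcont : ContinuousOn p (Icc 0 1))
    (hmap : ∀ d ∈ Icc (0:ℝ) 1, p d ∈ Ioo (0:ℝ) 1)
    (r y qy : ℝ) (hr : 1 < r) (hy : y ∈ Ioc (0:ℝ) 1) (hqy : qy ∈ Ioc (0:ℝ) 1)
    (β₁ β₂ P₁ P₂ : ℝ)
    (hβ₁ : β₁ ∈ Icc (0:ℝ) 1) (hβ₂ : β₂ ∈ Icc (0:ℝ) 1) (hββ : β₁ < β₂)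
    (hP₁mem : P₁ ∈ Icc (0:ℝ) 1) (hP₂mem : P₂ ∈ Icc (0:ℝ) 1)
    (hP₁ : P₁ = p ((1 - P₁ * β₁ * qy) * y))
    (hP₂ : P₂ = p ((1 - P₂ * β₂ * qy) * y)) :
    P₂ < P₁ := by
  obtain ⟨hy0, hy1⟩ := hy
  obtain ⟨hq0, hq1⟩ := hqy
  obtain ⟨hP10, hP11⟩ := hP₁mem
  obtain ⟨hP20, hP21⟩ := hP₂mem
  obtain ⟨hb10, hb11⟩ := hβ₁
  obtain ⟨hb20, hb21⟩ := hβ₂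
  have harg : ∀ P β : ℝ, 0 ≤ P → P ≤ 1 → 0 ≤ β → β ≤ 1 →
      (1 - P * β * qy) * y ∈ Icc (0:ℝ) 1 := by
    intro P β h0 h1 h2 h3
    have hPb : 0 ≤ P * β * qy := by positivity
    have hPb1 : P * β * qy ≤ 1 := by nlinarith [mul_nonneg h0 h2, mul_nonneg (mul_nonneg h0 h2) hq0.le]
    constructor
    · nlinarith
    · nlinarith
  have h1 := harg P₁ β₁ hP10 hP11 hb10 hb11
  have h2 := harg P₂ β₂ hP20 hP21 hb20 hb21
  have hP2pos : 0 < P₂ := by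
    rw [hP₂]; exact (hmap _ h2).1
  by_contra h
  push_neg at h
  -- h : P₁ ≤ P₂
  have hlt : (1 - P₂ * β₂ * qy) * y < (1 - P₁ * β₁ * qy) * y := by
    have h3 : P₁ * β₁ < P₂ * β₂ := by nlinarith
    nlinarith [mul_pos (mul_pos (sub_pos.2 h3) hq0) hy0]
  have := hmono h2 h1 hlt
  rw [← hP₁, ← hP₂] at this
  linarith
end

section
/- Let r > 1, y ∈ [0,1], q(y) ∈ [0,1]. Define F : [0,1] → ℝ by F(β) = P(β) where P(β) is the paper's equilibrium accident probability function: F is weakly increasing on the set of β where 1/(1 + r(1 - β q(y))) ≤ p((1 - β q(y)/(1 + r(1 - β q(y))))·y) (regimes R3 ∪ R4, where F(β) = max(p(0), 1/(1 + r(1 - β q(y))))), and weakly decreasing on its complement. Consequently, min over β ∈ [0,1] of F(β) is attained at β = 0 or at β = 1. -/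
open Set

/-- Theorem 2 of the paper. Let `F β` be the equilibrium accident probability of
the game `(β, y, r)`, characterized regime-by-regime by the paper's eq. (9):
`F β = p 0` in regime (R3), `F β = 1/(1 + r(1 - β q(y)))` in regime (R4),
`F β = 1/(1+r)` in regime (R2), and `F β` solves the implicit consistency
equations in regimes (R1) and (R5).  Then `F` is weakly increasing on the set
`A` of `β ∈ [0,1]` where `1/(1 + r(1 - β q)) ≤ p((1 - β q/(1 + r(1 - β q))) y)`
(regimes R3 ∪ R4, where `F β = max (p 0) (1/(1 + r(1 - β q)))`), weakly
decreasing on its complement in `[0,1]`, and its minimum over `[0,1]` is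
attained at `β = 0` or at `β = 1`. -/
theorem stmt14
    (p : ℝ → ℝ)
    (hmono : StrictMonoOn p (Icc 0 1))
    (hcont : ContinuousOn p (Icc 0 1))
    (hmap : ∀ d ∈ Icc (0:ℝ) 1, p d ∈ Ioo (0:ℝ) 1)
    (r y qy : ℝ) (hr : 1 < r) (hy : y ∈ Icc (0:ℝ) 1) (hqy : qy ∈ Icc (0:ℝ) 1)
    (F : ℝ → ℝ)
    (hFmem : ∀ β ∈ Icc (0:ℝ) 1, F β ∈ Icc (0:ℝ) 1)
    -- regime (R3): all careful
    (hR3 : ∀ β ∈ Icc (0:ℝ) 1,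
      1 / (1 + r * (1 - β * qy)) < p 0 → F β = p 0)
    -- regime (R4): non-V2V careful, unsignaled V2V indifferent
    (hR4 : ∀ β ∈ Icc (0:ℝ) 1,
      p 0 ≤ 1 / (1 + r * (1 - β * qy)) →
      1 / (1 + r * (1 - β * qy)) ≤
        p ((1 - β * qy / (1 + r * (1 - β * qy))) * y) →
      F β = 1 / (1 + r * (1 - β * qy)))
    -- regime (R2): non-V2V indifferent, unsignaled V2V reckless
    (hR2 : ∀ β ∈ Icc (0:ℝ) 1,
      p ((1 - β * qy / (1 + r)) * y) ≤ 1 / (1 + r) →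
      1 / (1 + r) ≤ p (1 - β * qy / (1 + r) * y) →
      F β = 1 / (1 + r))
    -- regime (R1): all reckless, implicit consistency equation
    (hR1 : ∀ β ∈ Icc (0:ℝ) 1,
      p (1 - β * qy / (1 + r) * y) < 1 / (1 + r) →
      F β = p (1 - F β * β * qy * y))
    -- regime (R5): non-V2V careful, unsignaled V2V reckless, implicit equation
    (hR5 : ∀ β ∈ Icc (0:ℝ) 1,
      p ((1 - β * qy / (1 + r * (1 - β * qy))) * y) < 1 / (1 + r * (1 - β * qy)) →
      1 / (1 + r) < p ((1 - β * qy / (1 + r)) * y) →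
      F β = p ((1 - F β * β * qy) * y)) :
    MonotoneOn F {β ∈ Icc (0:ℝ) 1 |
        1 / (1 + r * (1 - β * qy)) ≤
          p ((1 - β * qy / (1 + r * (1 - β * qy))) * y)} ∧
    AntitoneOn F (Icc (0:ℝ) 1 \ {β ∈ Icc (0:ℝ) 1 |
        1 / (1 + r * (1 - β * qy)) ≤
          p ((1 - β * qy / (1 + r * (1 - β * qy))) * y)}) ∧
    ((∀ β ∈ Icc (0:ℝ) 1, F 0 ≤ F β) ∨ (∀ β ∈ Icc (0:ℝ) 1, F 1 ≤ F β)) := by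
  obtain ⟨hy0, hy1⟩ := hy
  obtain ⟨hq0, hq1⟩ := hqy
  have hr0 : (0:ℝ) < r := by linarith
  have h1r : (0:ℝ) < 1 + r := by linarith
  have hpm : MonotoneOn p (Icc 0 1) := hmono.monotoneOn
  have hbq0 : ∀ β ∈ Icc (0:ℝ) 1, 0 ≤ β * qy := fun β hβ => mul_nonneg hβ.1 hq0
  have hbq1 : ∀ β ∈ Icc (0:ℝ) 1, β * qy ≤ 1 := by
    rintro β ⟨h0, h1⟩; nlinarith
  have hDpos : ∀ β ∈ Icc (0:ℝ) 1, 0 < 1 + r * (1 - β * qy) := by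
    intro β hβ; nlinarith [hbq1 β hβ]
  have hD1 : ∀ β ∈ Icc (0:ℝ) 1, 1 ≤ 1 + r * (1 - β * qy) := by
    intro β hβ; nlinarith [hbq1 β hβ]
  have hgmono : ∀ β1 ∈ Icc (0:ℝ) 1, ∀ β2 ∈ Icc (0:ℝ) 1, β1 ≤ β2 →
      1 / (1 + r * (1 - β1 * qy)) ≤ 1 / (1 + r * (1 - β2 * qy)) := by
    intro β1 h1 β2 h2 h12
    apply one_div_le_one_div_of_le (hDpos β2 h2)
    nlinarith [mul_nonneg (mul_nonneg (sub_nonneg.2 h12) hq0) hr0.le]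
  have hx3mem : ∀ β ∈ Icc (0:ℝ) 1,
      (1 - β * qy / (1 + r * (1 - β * qy))) * y ∈ Icc (0:ℝ) 1 := by
    intro β hβ
    have ht0 : 0 ≤ β * qy / (1 + r * (1 - β * qy)) :=
      div_nonneg (hbq0 β hβ) (hDpos β hβ).le
    have ht1 : β * qy / (1 + r * (1 - β * qy)) ≤ 1 := by
      rw [div_le_one (hDpos β hβ)]
      linarith [hbq1 β hβ, hD1 β hβ]
    exact ⟨mul_nonneg (by linarith) hy0, by nlinarith⟩
  have hx3anti : ∀ β1 ∈ Icc (0:ℝ) 1, ∀ β2 ∈ Icc (0:ℝ) 1, β1 ≤ β2 →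
      (1 - β2 * qy / (1 + r * (1 - β2 * qy))) * y ≤
        (1 - β1 * qy / (1 + r * (1 - β1 * qy))) * y := by
    intro β1 h1 β2 h2 h12
    have hd : 1 + r * (1 - β2 * qy) ≤ 1 + r * (1 - β1 * qy) := by
      nlinarith [mul_nonneg (mul_nonneg (sub_nonneg.2 h12) hq0) hr0.le]
    have ht : β1 * qy / (1 + r * (1 - β1 * qy)) ≤
        β2 * qy / (1 + r * (1 - β2 * qy)) := by
      apply div_le_div₀ (hbq0 β2 h2) ?_ (hDpos β2 h2) hd
      nlinarith [mul_nonneg (sub_nonneg.2 h12) hq0]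
    nlinarith [mul_le_mul_of_nonneg_right ht hy0]
  have hx1mem : ∀ β ∈ Icc (0:ℝ) 1, (1 - β * qy / (1 + r)) * y ∈ Icc (0:ℝ) 1 := by
    intro β hβ
    have ht0 : 0 ≤ β * qy / (1 + r) := div_nonneg (hbq0 β hβ) h1r.le
    have ht1 : β * qy / (1 + r) ≤ 1 := by
      rw [div_le_one h1r]; linarith [hbq1 β hβ]
    exact ⟨mul_nonneg (by linarith) hy0, by nlinarith⟩
  have hx2mem : ∀ β ∈ Icc (0:ℝ) 1, 1 - β * qy / (1 + r) * y ∈ Icc (0:ℝ) 1 := by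
    intro β hβ
    have ht0 : 0 ≤ β * qy / (1 + r) := div_nonneg (hbq0 β hβ) h1r.le
    have ht1 : β * qy / (1 + r) ≤ 1 := by
      rw [div_le_one h1r]; linarith [hbq1 β hβ]
    exact ⟨by nlinarith, by nlinarith⟩
  have hx1le2 : ∀ β ∈ Icc (0:ℝ) 1,
      (1 - β * qy / (1 + r)) * y ≤ 1 - β * qy / (1 + r) * y := by
    intro β hβ
    have ht0 : 0 ≤ β * qy / (1 + r) := div_nonneg (hbq0 β hβ) h1r.le
    nlinarith
  have hx1anti : ∀ β1 ∈ Icc (0:ℝ) 1, ∀ β2 ∈ Icc (0:ℝ) 1, β1 ≤ β2 →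
      (1 - β2 * qy / (1 + r)) * y ≤ (1 - β1 * qy / (1 + r)) * y := by
    intro β1 h1 β2 h2 h12
    have ht : β1 * qy / (1 + r) ≤ β2 * qy / (1 + r) :=
      div_le_div₀ (hbq0 β2 h2) (by nlinarith [mul_nonneg (sub_nonneg.2 h12) hq0])
        h1r le_rfl
    nlinarith [mul_le_mul_of_nonneg_right ht hy0]
  have hx2anti : ∀ β1 ∈ Icc (0:ℝ) 1, ∀ β2 ∈ Icc (0:ℝ) 1, β1 ≤ β2 →
      1 - β2 * qy / (1 + r) * y ≤ 1 - β1 * qy / (1 + r) * y := by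
    intro β1 h1 β2 h2 h12
    have ht : β1 * qy / (1 + r) ≤ β2 * qy / (1 + r) :=
      div_le_div₀ (hbq0 β2 h2) (by nlinarith [mul_nonneg (sub_nonneg.2 h12) hq0])
        h1r le_rfl
    nlinarith [mul_le_mul_of_nonneg_right ht hy0]
  have hmem5 : ∀ β ∈ Icc (0:ℝ) 1, (1 - F β * β * qy) * y ∈ Icc (0:ℝ) 1 := by
    intro β hβ
    obtain ⟨hF0, hF1⟩ := hFmem β hβ
    obtain ⟨hb0, hb1⟩ := hβ
    have h0 : 0 ≤ F β * β * qy := mul_nonneg (mul_nonneg hF0 hb0) hq0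
    have h1 : F β * β * qy ≤ 1 := mul_le_one₀ (mul_le_one₀ hF1 hb0 hb1) hq0 hq1
    exact ⟨mul_nonneg (by linarith) hy0, by nlinarith⟩
  have hmem1 : ∀ β ∈ Icc (0:ℝ) 1, 1 - F β * β * qy * y ∈ Icc (0:ℝ) 1 := by
    intro β hβ
    obtain ⟨hF0, hF1⟩ := hFmem β hβ
    obtain ⟨hb0, hb1⟩ := hβ
    have h0 : 0 ≤ F β * β * qy * y := mul_nonneg (mul_nonneg (mul_nonneg hF0 hb0) hq0) hy0
    have h1 : F β * β * qy * y ≤ 1 :=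
      mul_le_one₀ (mul_le_one₀ (mul_le_one₀ hF1 hb0 hb1) hq0 hq1) hy0 hy1
    exact ⟨by linarith, by linarith⟩
  -- value on the regime set A
  have hAval : ∀ β ∈ Icc (0:ℝ) 1,
      1 / (1 + r * (1 - β * qy)) ≤ p ((1 - β * qy / (1 + r * (1 - β * qy))) * y) →
      F β = max (p 0) (1 / (1 + r * (1 - β * qy))) := by
    intro β hβ hA
    rcases lt_or_ge (1 / (1 + r * (1 - β * qy))) (p 0) with h | h
    · rw [hR3 β hβ h, max_eq_left h.le]
    · rw [hR4 β hβ h hA, max_eq_right h]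
  -- classification on the complement
  have hBclass : ∀ β ∈ Icc (0:ℝ) 1,
      p ((1 - β * qy / (1 + r * (1 - β * qy))) * y) < 1 / (1 + r * (1 - β * qy)) →
      (1 / (1 + r) < p ((1 - β * qy / (1 + r)) * y) ∧
        F β = p ((1 - F β * β * qy) * y) ∧ 1 / (1 + r) < F β) ∨
      (p ((1 - β * qy / (1 + r)) * y) ≤ 1 / (1 + r) ∧
        1 / (1 + r) ≤ p (1 - β * qy / (1 + r) * y) ∧ F β = 1 / (1 + r)) ∨
      (p (1 - β * qy / (1 + r) * y) < 1 / (1 + r) ∧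
        F β = p (1 - F β * β * qy * y) ∧ F β < 1 / (1 + r)) := by
    intro β hβ hB
    obtain ⟨hF0, hF1⟩ := hFmem β hβ
    rcases lt_or_ge (1 / (1 + r)) (p ((1 - β * qy / (1 + r)) * y)) with h5 | h15
    · left
      have heq := hR5 β hβ hB h5
      refine ⟨h5, heq, ?_⟩
      by_contra hcon
      push_neg at hcon
      have hc1 : F β * (1 + r) ≤ 1 := by
        have := (le_div_iff₀ h1r).mp hcon
        linarith [this]
      have hkey : F β * β * qy ≤ β * qy / (1 + r) := by
        rw [le_div_iff₀ h1r]
        nlinarith [mul_le_mul_of_nonneg_left hc1 (hbq0 β hβ)]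
      have harg : (1 - β * qy / (1 + r)) * y ≤ (1 - F β * β * qy) * y := by
        nlinarith [mul_le_mul_of_nonneg_right hkey hy0]
      have hple := hpm (hx1mem β hβ) (hmem5 β hβ) harg
      rw [← heq] at hple
      linarith
    · rcases le_or_gt (1 / (1 + r)) (p (1 - β * qy / (1 + r) * y)) with h2 | h1
      · exact Or.inr (Or.inl ⟨h15, h2, hR2 β hβ h15 h2⟩)
      · right; right
        have heq := hR1 β hβ h1
        refine ⟨h1, heq, ?_⟩
        by_contra hcon
        push_neg at hcon
        have hc1 : 1 ≤ F β * (1 + r) := by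
          have := (div_le_iff₀ h1r).mp hcon
          linarith [this]
        have hkey : β * qy / (1 + r) ≤ F β * β * qy := by
          rw [div_le_iff₀ h1r]
          nlinarith [mul_le_mul_of_nonneg_left hc1 (hbq0 β hβ)]
        have harg : 1 - F β * β * qy * y ≤ 1 - β * qy / (1 + r) * y := by
          nlinarith [mul_le_mul_of_nonneg_right hkey hy0]
        have hple := hpm (hmem1 β hβ) (hx2mem β hβ) harg
        rw [← heq] at hple
        linarith
  -- monotone on A
  have hMono : MonotoneOn F {β ∈ Icc (0:ℝ) 1 |
      1 / (1 + r * (1 - β * qy)) ≤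
        p ((1 - β * qy / (1 + r * (1 - β * qy))) * y)} := by
    intro a ha b hb hab
    obtain ⟨haI, haC⟩ := ha
    obtain ⟨hbI, hbC⟩ := hb
    rw [hAval a haI haC, hAval b hbI hbC]
    exact max_le_max le_rfl (hgmono a haI b hbI hab)
  -- antitone on the complement
  have hAnti : AntitoneOn F (Icc (0:ℝ) 1 \ {β ∈ Icc (0:ℝ) 1 |
      1 / (1 + r * (1 - β * qy)) ≤
        p ((1 - β * qy / (1 + r * (1 - β * qy))) * y)}) := by
    intro a ha b hb hab
    have haI : a ∈ Icc (0:ℝ) 1 := ha.1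
    have hbI : b ∈ Icc (0:ℝ) 1 := hb.1
    have haB : p ((1 - a * qy / (1 + r * (1 - a * qy))) * y) <
        1 / (1 + r * (1 - a * qy)) :=
      not_le.mp fun h => ha.2 ⟨haI, h⟩
    have hbB : p ((1 - b * qy / (1 + r * (1 - b * qy))) * y) <
        1 / (1 + r * (1 - b * qy)) :=
      not_le.mp fun h => hb.2 ⟨hbI, h⟩
    rcases hBclass a haI haB with ⟨ha5, haeq, haval⟩ | ⟨ha15, ha2, haval⟩ |
        ⟨ha1, haeq, haval⟩ <;>
      rcases hBclass b hbI hbB with ⟨hb5, hbeq, hbval⟩ | ⟨hb15, hb2, hbval⟩ |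
        ⟨hb1, hbeq, hbval⟩
    · -- R5, R5
      by_contra h
      push_neg at h
      have h1 : F a * a * qy ≤ F b * b * qy :=
        mul_le_mul_of_nonneg_right
          (mul_le_mul h.le hab haI.1 (hFmem b hbI).1) hq0
      have harg : (1 - F b * b * qy) * y ≤ (1 - F a * a * qy) * y := by
        nlinarith [mul_le_mul_of_nonneg_right h1 hy0]
      have := hpm (hmem5 b hbI) (hmem5 a haI) harg
      rw [← haeq, ← hbeq] at this
      linarith
    · -- R5, R2
      rw [hbval]; linarith
    · -- R5, R1
      linarith
    · -- R2, R5 : impossible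
      have := hpm (hx1mem b hbI) (hx1mem a haI) (hx1anti a haI b hbI hab)
      linarith
    · -- R2, R2
      rw [haval, hbval]
    · -- R2, R1
      rw [haval]; linarith
    · -- R1, R5 : impossible
      have h1 := hpm (hx1mem b hbI) (hx2mem b hbI) (hx1le2 b hbI)
      have h2 := hpm (hx2mem b hbI) (hx2mem a haI) (hx2anti a haI b hbI hab)
      linarith
    · -- R1, R2 : impossible
      have h2 := hpm (hx2mem b hbI) (hx2mem a haI) (hx2anti a haI b hbI hab)
      linarith
    · -- R1, R1
      by_contra h
      push_neg at h
      have h1 : F a * a * qy * y ≤ F b * b * qy * y :=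
        mul_le_mul_of_nonneg_right
          (mul_le_mul_of_nonneg_right
            (mul_le_mul h.le hab haI.1 (hFmem b hbI).1) hq0) hy0
      have harg : 1 - F b * b * qy * y ≤ 1 - F a * a * qy * y := by linarith
      have := hpm (hmem1 b hbI) (hmem1 a haI) harg
      rw [← haeq, ← hbeq] at this
      linarith
  refine ⟨hMono, hAnti, ?_⟩
  -- the set A is a down-set
  have hdown : ∀ a ∈ Icc (0:ℝ) 1, ∀ b ∈ Icc (0:ℝ) 1, a ≤ b →
      1 / (1 + r * (1 - b * qy)) ≤ p ((1 - b * qy / (1 + r * (1 - b * qy))) * y) →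
      1 / (1 + r * (1 - a * qy)) ≤
        p ((1 - a * qy / (1 + r * (1 - a * qy))) * y) := by
    intro a haI b hbI hab hb
    calc 1 / (1 + r * (1 - a * qy)) ≤ 1 / (1 + r * (1 - b * qy)) :=
          hgmono a haI b hbI hab
      _ ≤ p ((1 - b * qy / (1 + r * (1 - b * qy))) * y) := hb
      _ ≤ p ((1 - a * qy / (1 + r * (1 - a * qy))) * y) :=
          hpm (hx3mem b hbI) (hx3mem a haI) (hx3anti a haI b hbI hab)
  have h0I : (0:ℝ) ∈ Icc (0:ℝ) 1 := ⟨le_refl 0, zero_le_one⟩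
  have h1I : (1:ℝ) ∈ Icc (0:ℝ) 1 := ⟨zero_le_one, le_refl 1⟩
  rcases le_or_gt (F 0) (F 1) with h01 | h01
  · left
    intro β hβ
    by_cases hbC : 1 / (1 + r * (1 - β * qy)) ≤
        p ((1 - β * qy / (1 + r * (1 - β * qy))) * y)
    · have h0C := hdown 0 h0I β hβ hβ.1 hbC
      exact hMono ⟨h0I, h0C⟩ ⟨hβ, hbC⟩ hβ.1
    · have h1C : ¬ (1 / (1 + r * (1 - 1 * qy)) ≤
          p ((1 - 1 * qy / (1 + r * (1 - 1 * qy))) * y)) := fun h =>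
        hbC (hdown β hβ 1 h1I hβ.2 h)
      have := hAnti ⟨hβ, fun h => hbC h.2⟩ ⟨h1I, fun h => h1C h.2⟩ hβ.2
      linarith
  · right
    intro β hβ
    by_cases hbC : 1 / (1 + r * (1 - β * qy)) ≤
        p ((1 - β * qy / (1 + r * (1 - β * qy))) * y)
    · have h0C := hdown 0 h0I β hβ hβ.1 hbC
      have := hMono ⟨h0I, h0C⟩ ⟨hβ, hbC⟩ hβ.1
      linarith
    · have h1C : ¬ (1 / (1 + r * (1 - 1 * qy)) ≤
          p ((1 - 1 * qy / (1 + r * (1 - 1 * qy))) * y)) := fun h =>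
        hbC (hdown β hβ 1 h1I hβ.2 h)
      exact hAnti ⟨hβ, fun h => hbC h.2⟩ ⟨h1I, fun h => h1C h.2⟩ hβ.2
end
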